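/- Let ψ₀ > 0, A_θ > 0, and let ψ₂, ψθ₂, A, u, ω, c, f, q, m₂₁, m₂₃ be real numbers with A > 0. Define the 3×3 real matrix M_θ with rows ( −(Ac/A_θ)ω , 0 , 1/A_θ ), ( m₂₁ , (ψ₂/ψ₀)ω , m₂₃ ), ( q − (ψθ₂(A_θ + Ac) − A·A_θ·f)ω² , 0 , 2ψθ₂ω ), and set Υ₂ = (1/A_θ²)(ψθ₂A_θ − Ac/2)² + (1/A_θ)(A(fA_θ + ψθ₂c) − ψθ₂A_θ). If q/A_θ + Υ₂ω² ≥ 0, then the characteristic polynomial of M_θ factors as det(M_θ − λI) = ((ψ₂/ψ₀)ω − λ)(λ − λ₊^θ)(λ − λ₋^θ), so the eigenvalues of M_θ are exactly λ₀^θ = (ψ₂/ψ₀)ω and λ±^θ = ((2ψθ₂A_θ − Ac)/(2A_θ))·ω ± √(q/A_θ + Υ₂ω²), and in particular all eigenvalues of M_θ are real. -/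

import Mathlib

open Matrix

/-- The coefficient matrix `M_θ` (angular direction) of the quasilinear form of the
2D blood-flow model, with the state abstracted into real parameters. -/
noncomputable def Mθ (ψ₀ Aθ ψ₂ ψθ₂ A u ω c f q m₂₁ m₂₃ : ℝ) : Matrix (Fin 3) (Fin 3) ℝ :=
  !![-(A * c / Aθ) * ω, 0, 1 / Aθ;
     m₂₁, (ψ₂ / ψ₀) * ω, m₂₃;
     q - (ψθ₂ * (Aθ + A * c) - A * Aθ * f) * ω ^ 2, 0, 2 * ψθ₂ * ω]

private lemma key2' {K : Type*} [Field K] [CharZero K] (Aθ ψθ₂ A ω c f q s lam : K)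
    (hAθ : Aθ ≠ 0)
    (hs : s ^ 2 = q / Aθ + ((1 / Aθ ^ 2) * (ψθ₂ * Aθ - A * c / 2) ^ 2
        + (1 / Aθ) * (A * (f * Aθ + ψθ₂ * c) - ψθ₂ * Aθ)) * ω ^ 2) :
    (-(A * c / Aθ) * ω - lam) * (2 * ψθ₂ * ω - lam)
      - (q - (ψθ₂ * (Aθ + A * c) - A * Aθ * f) * ω ^ 2) * (1 / Aθ)
      = (lam - (((2 * ψθ₂ * Aθ - A * c) / (2 * Aθ)) * ω + s))
        * (lam - (((2 * ψθ₂ * Aθ - A * c) / (2 * Aθ)) * ω - s)) := by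
  have ht : Aθ * Aθ⁻¹ = 1 := mul_inv_cancel₀ hAθ
  linear_combination hs + (2 * ψθ₂ * ω * lam) * ht

private lemma det_fact' {K : Type*} [Field K] [CharZero K]
    (ψ₀ Aθ ψ₂ ψθ₂ A ω c f q m₂₁ m₂₃ s lam : K)
    (hAθ : Aθ ≠ 0)
    (hs : s ^ 2 = q / Aθ + ((1 / Aθ ^ 2) * (ψθ₂ * Aθ - A * c / 2) ^ 2
        + (1 / Aθ) * (A * (f * Aθ + ψθ₂ * c) - ψθ₂ * Aθ)) * ω ^ 2) :
    ((!![-(A * c / Aθ) * ω, 0, 1 / Aθ;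
     m₂₁, (ψ₂ / ψ₀) * ω, m₂₃;
     q - (ψθ₂ * (Aθ + A * c) - A * Aθ * f) * ω ^ 2, 0, 2 * ψθ₂ * ω] : Matrix (Fin 3) (Fin 3) K)
      - lam • 1).det
      = ((ψ₂ / ψ₀) * ω - lam)
        * (lam - (((2 * ψθ₂ * Aθ - A * c) / (2 * Aθ)) * ω + s))
        * (lam - (((2 * ψθ₂ * Aθ - A * c) / (2 * Aθ)) * ω - s)) := by
  have h := key2' Aθ ψθ₂ A ω c f q s lam hAθ hs
  simp [Matrix.det_fin_three, Matrix.one_fin_three]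
  linear_combination ((ψ₂ / ψ₀) * ω - lam) * h

private lemma mem_spec_iff' {n : Type*} [Fintype n] [DecidableEq n] {K : Type*} [Field K]
    (M : Matrix n n K) (z : K) :
    z ∈ spectrum K M ↔ (M - z • (1 : Matrix n n K)).det = 0 := by
  rw [spectrum.mem_iff, Matrix.isUnit_iff_isUnit_det, isUnit_iff_ne_zero, not_ne_iff,
    Algebra.algebraMap_eq_smul_one]
  constructor
  · intro h
    have e : (M - z • 1) = -(z • (1 : Matrix n n K) - M) := by abel
    rw [e, Matrix.det_neg]
    simp [h]
  · intro h
    have e : (z • (1 : Matrix n n K) - M) = -(M - z • 1) := by abel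
    rw [e, Matrix.det_neg]
    simp [h]

theorem stmt1 (ψ₀ Aθ ψ₂ ψθ₂ A u ω c f q m₂₁ m₂₃ : ℝ)
    (hψ₀ : 0 < ψ₀) (hAθ : 0 < Aθ) (hA : 0 < A)
    (Υ₂ : ℝ)
    (hΥ₂ : Υ₂ = (1 / Aθ ^ 2) * (ψθ₂ * Aθ - A * c / 2) ^ 2
        + (1 / Aθ) * (A * (f * Aθ + ψθ₂ * c) - ψθ₂ * Aθ))
    (lamP lamM : ℝ)
    (hlamP : lamP = ((2 * ψθ₂ * Aθ - A * c) / (2 * Aθ)) * ω + Real.sqrt (q / Aθ + Υ₂ * ω ^ 2))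
    (hlamM : lamM = ((2 * ψθ₂ * Aθ - A * c) / (2 * Aθ)) * ω - Real.sqrt (q / Aθ + Υ₂ * ω ^ 2))
    (hnn : 0 ≤ q / Aθ + Υ₂ * ω ^ 2) :
    (∀ lam : ℝ,
      (Mθ ψ₀ Aθ ψ₂ ψθ₂ A u ω c f q m₂₁ m₂₃ - lam • (1 : Matrix (Fin 3) (Fin 3) ℝ)).det
        = ((ψ₂ / ψ₀) * ω - lam) * (lam - lamP) * (lam - lamM)) ∧
    spectrum ℝ (Mθ ψ₀ Aθ ψ₂ ψθ₂ A u ω c f q m₂₁ m₂₃) = {(ψ₂ / ψ₀) * ω, lamP, lamM} ∧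
    (∀ z ∈ spectrum ℂ ((Mθ ψ₀ Aθ ψ₂ ψθ₂ A u ω c f q m₂₁ m₂₃).map (fun x : ℝ => (x : ℂ))),
      z.im = 0) := by
  have hAθ' : Aθ ≠ 0 := ne_of_gt hAθ
  set s : ℝ := Real.sqrt (q / Aθ + Υ₂ * ω ^ 2) with hs_def
  have hs : s ^ 2 = q / Aθ + ((1 / Aθ ^ 2) * (ψθ₂ * Aθ - A * c / 2) ^ 2
      + (1 / Aθ) * (A * (f * Aθ + ψθ₂ * c) - ψθ₂ * Aθ)) * ω ^ 2 := by
    rw [hs_def, Real.sq_sqrt hnn, hΥ₂]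
  have hdet : ∀ lam : ℝ,
      (Mθ ψ₀ Aθ ψ₂ ψθ₂ A u ω c f q m₂₁ m₂₃ - lam • (1 : Matrix (Fin 3) (Fin 3) ℝ)).det
        = ((ψ₂ / ψ₀) * ω - lam) * (lam - lamP) * (lam - lamM) := by
    intro lam
    rw [hlamP, hlamM]
    exact det_fact' ψ₀ Aθ ψ₂ ψθ₂ A ω c f q m₂₁ m₂₃ s lam hAθ' hs
  refine ⟨hdet, ?_, ?_⟩
  · ext z
    rw [mem_spec_iff', hdet z]
    simp only [Set.mem_insert_iff, Set.mem_singleton_iff, mul_eq_zero, sub_eq_zero]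
    constructor
    · rintro ((h | h) | h)
      · exact Or.inl h.symm
      · exact Or.inr (Or.inl h)
      · exact Or.inr (Or.inr h)
    · rintro (h | h | h)
      · exact Or.inl (Or.inl h.symm)
      · exact Or.inl (Or.inr h)
      · exact Or.inr h
  · intro z hz
    have hmap : (Mθ ψ₀ Aθ ψ₂ ψθ₂ A u ω c f q m₂₁ m₂₃).map (fun x : ℝ => (x : ℂ))
        = !![-((A : ℂ) * c / Aθ) * ω, 0, 1 / Aθ;
             (m₂₁ : ℂ), ((ψ₂ : ℂ) / ψ₀) * ω, (m₂₃ : ℂ);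
             (q : ℂ) - ((ψθ₂ : ℂ) * (Aθ + A * c) - A * Aθ * f) * (ω : ℂ) ^ 2, 0,
             2 * (ψθ₂ : ℂ) * ω] := by
      ext i j
      fin_cases i <;> fin_cases j <;> simp [Mθ] <;> push_cast <;> ring
    have hAθC : (Aθ : ℂ) ≠ 0 := by exact_mod_cast hAθ'
    have hsC : (s : ℂ) ^ 2 = (q : ℂ) / Aθ + ((1 / (Aθ : ℂ) ^ 2) * (ψθ₂ * Aθ - A * c / 2) ^ 2
        + (1 / (Aθ : ℂ)) * (A * (f * Aθ + ψθ₂ * c) - ψθ₂ * Aθ)) * (ω : ℂ) ^ 2 := by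
      have := congrArg (fun x : ℝ => (x : ℂ)) hs
      push_cast at this
      exact_mod_cast hs
    rw [mem_spec_iff', hmap,
      det_fact' (ψ₀ : ℂ) Aθ ψ₂ ψθ₂ A ω c f q m₂₁ m₂₃ (s : ℂ) z hAθC hsC] at hz
    rcases mul_eq_zero.mp hz with h | h
    · rcases mul_eq_zero.mp h with h | h
      · have e : (((ψ₂ / ψ₀) * ω : ℝ) : ℂ) = (ψ₂ : ℂ) / ψ₀ * ω := by push_cast; ring
        rw [(sub_eq_zero.mp h).symm, ← e]
        exact Complex.ofReal_im _
      · have e : ((((2 * ψθ₂ * Aθ - A * c) / (2 * Aθ)) * ω + s : ℝ) : ℂ)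
            = (2 * (ψθ₂ : ℂ) * Aθ - A * c) / (2 * Aθ) * ω + (s : ℂ) := by push_cast; ring
        rw [sub_eq_zero.mp h, ← e]
        exact Complex.ofReal_im _
    · have e : ((((2 * ψθ₂ * Aθ - A * c) / (2 * Aθ)) * ω - s : ℝ) : ℂ)
          = (2 * (ψθ₂ : ℂ) * Aθ - A * c) / (2 * Aθ) * ω - (s : ℂ) := by push_cast; ring
      rw [sub_eq_zero.mp h, ← e]
      exact Complex.ofReal_im _
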